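/- Let K ⊆ E be a regular closed convex cone, e ∈ int(K), and take ‖·‖ = ‖·‖_e, the norm induced by (K,e). Then for any linear subspace L ⊆ E, ν(L) := min{‖u−y‖_e* : u ∈ K*, y ∈ L^⊥, ⟨u,e⟩ = 1} equals max{λ_e(x) : x ∈ L, ‖x‖_e ≤ 1}, where λ_e(x) = max{t : x − te ∈ K}. -/

import Mathlib

open RealInnerProductSpace

/-- The dual norm `‖u‖* = max_{N x = 1} ⟪u,x⟫`. -/
noncomputable def dualNorm {E : Type*} [NormedAddCommGroup E] [InnerProductSpace ℝ E]
    (N : E → ℝ) (u : E) : ℝ :=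
  sSup {r | ∃ x, N x = 1 ∧ r = ⟪u, x⟫}

/-- The dual cone `K* = {u : ⟪u,x⟫ ≥ 0 for all x ∈ K}`. -/
def dualCone {E : Type*} [NormedAddCommGroup E] [InnerProductSpace ℝ E] (K : Set E) :
    Set E := {u | ∀ x ∈ K, 0 ≤ ⟪u, x⟫}

/-- The norm `‖x‖ₑ = min {α ≥ 0 : x + αe ∈ K, −x + αe ∈ K}` induced by `(K, e)`. -/
noncomputable def inducedNorm {E : Type*} [NormedAddCommGroup E] [InnerProductSpace ℝ E]
    (K : Set E) (e : E) (x : E) : ℝ :=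
  sInf {α | 0 ≤ α ∧ x + α • e ∈ K ∧ -x + α • e ∈ K}

/-- The eigenvalue mapping `λₑ(x) = max {t : x − te ∈ K}` induced by `(K, e)`. -/
noncomputable def inducedEig {E : Type*} [NormedAddCommGroup E] [InnerProductSpace ℝ E]
    (K : Set E) (e : E) (x : E) : ℝ :=
  sSup {t | x - t • e ∈ K}

set_option linter.unusedSectionVars false
set_option linter.unusedVariables false
set_option maxHeartbeats 1000000

namespace NuDualityAux

variable {E : Type*} [NormedAddCommGroup E] [InnerProductSpace ℝ E]
variable {K : Set E} {e : E}

variable {E : Type*} [NormedAddCommGroup E] [InnerProductSpace ℝ E]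
variable {K : Set E} {e : E}

def NSet (K : Set E) (e : E) (x : E) : Set ℝ := {α | 0 ≤ α ∧ x + α • e ∈ K ∧ -x + α • e ∈ K}

lemma hK0 (hKcone : ∀ ⦃c : ℝ⦄, 0 ≤ c → ∀ ⦃x⦄, x ∈ K → c • x ∈ K)
    (he : e ∈ interior K) : (0:E) ∈ K := by
  have := hKcone le_rfl (interior_subset he)
  simpa using this

lemma hKadd (hKconv : Convex ℝ K)
    (hKcone : ∀ ⦃c : ℝ⦄, 0 ≤ c → ∀ ⦃x⦄, x ∈ K → c • x ∈ K)
    {x y : E} (hx : x ∈ K) (hy : y ∈ K) : x + y ∈ K := by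
  have h := hKconv hx hy (by norm_num : (0:ℝ) ≤ 1/2) (by norm_num : (0:ℝ) ≤ 1/2) (by norm_num)
  have h2 := hKcone (by norm_num : (0:ℝ) ≤ 2) h
  have : (2:ℝ) • ((1/2:ℝ) • x + (1/2:ℝ) • y) = x + y := by
    rw [smul_add, smul_smul, smul_smul]; norm_num
  rwa [this] at h2

lemma exists_eps (he : e ∈ interior K) :
    ∃ ε : ℝ, 0 < ε ∧ ∀ v : E, ‖v‖ ≤ ε → e + v ∈ K := by
  obtain ⟨δ, hδ, hball⟩ := Metric.mem_nhds_iff.mp (mem_interior_iff_mem_nhds.mp he)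
  refine ⟨δ/2, by positivity, fun v hv => hball ?_⟩
  simp only [Metric.mem_ball, dist_eq_norm]
  have : e + v - e = v := by abel
  rw [this]; linarith

lemma shift_mem (hKcone : ∀ ⦃c : ℝ⦄, 0 ≤ c → ∀ ⦃x⦄, x ∈ K → c • x ∈ K)
    (he : e ∈ interior K) {ε : ℝ} (hε : 0 < ε)
    (hball : ∀ v : E, ‖v‖ ≤ ε → e + v ∈ K) (x : E) : x + (‖x‖/ε) • e ∈ K := by
  rcases eq_or_ne x 0 with rfl | hx
  · simpa using hK0 hKcone he
  · have hxn : (0:ℝ) < ‖x‖ := norm_pos_iff.mpr hx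
    have hmem : e + (ε/‖x‖) • x ∈ K := by
      apply hball
      rw [norm_smul]
      rw [Real.norm_eq_abs, abs_of_pos (by positivity)]
      field_simp
      exact le_rfl
    have h := hKcone (by positivity : (0:ℝ) ≤ ‖x‖/ε) hmem
    have heq : (‖x‖/ε) • (e + (ε/‖x‖) • x) = x + (‖x‖/ε) • e := by
      rw [smul_add, smul_smul]
      rw [div_mul_div_comm]
      rw [mul_comm ‖x‖ ε, div_self (by positivity)]
      rw [one_smul]; abel
    rwa [heq] at h

lemma nset_mem_div (hKcone : ∀ ⦃c : ℝ⦄, 0 ≤ c → ∀ ⦃x⦄, x ∈ K → c • x ∈ K)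
    (he : e ∈ interior K) {ε : ℝ} (hε : 0 < ε)
    (hball : ∀ v : E, ‖v‖ ≤ ε → e + v ∈ K) (x : E) : ‖x‖/ε ∈ NSet K e x := by
  refine ⟨by positivity, shift_mem hKcone he hε hball x, ?_⟩
  have := shift_mem hKcone he hε hball (-x)
  rwa [norm_neg] at this

lemma nset_bddBelow (x : E) : BddBelow (NSet K e x) := ⟨0, fun a ha => ha.1⟩

lemma nset_closed (hKclosed : IsClosed K) (x : E) : IsClosed (NSet K e x) := by
  refine IsClosed.inter (isClosed_le continuous_const continuous_id) (IsClosed.inter ?_ ?_) <;>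
  · exact hKclosed.preimage (continuous_const.add (continuous_id.smul continuous_const))

lemma norm_mem (hKclosed : IsClosed K)
    (hKcone : ∀ ⦃c : ℝ⦄, 0 ≤ c → ∀ ⦃x⦄, x ∈ K → c • x ∈ K)
    (he : e ∈ interior K) (x : E) : inducedNorm K e x ∈ NSet K e x := by
  obtain ⟨ε, hε, hball⟩ := exists_eps he
  exact (nset_closed hKclosed x).csInf_mem ⟨_, nset_mem_div hKcone he hε hball x⟩
    (nset_bddBelow x)

lemma iN_le {x : E} {α : ℝ} (hα : α ∈ NSet K e x) : inducedNorm K e x ≤ α :=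
  csInf_le (nset_bddBelow x) hα

lemma iN_nonneg (hKclosed : IsClosed K)
    (hKcone : ∀ ⦃c : ℝ⦄, 0 ≤ c → ∀ ⦃x⦄, x ∈ K → c • x ∈ K)
    (he : e ∈ interior K) (x : E) : 0 ≤ inducedNorm K e x :=
  (norm_mem hKclosed hKcone he x).1


section Included
variable (hKclosed : IsClosed K) (hKconv : Convex ℝ K)
  (hKcone : ∀ ⦃c : ℝ⦄, 0 ≤ c → ∀ ⦃x⦄, x ∈ K → c • x ∈ K)
  (hKpointed : ∀ x ∈ K, -x ∈ K → x = 0)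
  (he : e ∈ interior K)

include hKclosed hKconv hKcone hKpointed he

lemma iN_zero : inducedNorm K e 0 = 0 := by
  refine le_antisymm (iN_le ?_) (norm_mem hKclosed hKcone he 0).1
  refine ⟨le_rfl, by simpa using hK0 hKcone he, by simpa using hK0 hKcone he⟩

lemma iN_smul_le (x : E) {c : ℝ} (hc : 0 < c) :
    inducedNorm K e (c • x) ≤ c * inducedNorm K e x := by
  obtain ⟨h0, h1, h2⟩ := norm_mem hKclosed hKcone he x
  refine iN_le ⟨by positivity, ?_, ?_⟩
  · have := hKcone hc.le h1
    rwa [smul_add, smul_smul] at this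
  · have := hKcone hc.le h2
    rwa [smul_add, smul_smul, smul_neg] at this

lemma iN_smul (x : E) {c : ℝ} (hc : 0 < c) :
    inducedNorm K e (c • x) = c * inducedNorm K e x := by
  refine le_antisymm (iN_smul_le hKclosed hKconv hKcone hKpointed he x hc) ?_
  have h := iN_smul_le hKclosed hKconv hKcone hKpointed he (c • x) (inv_pos.mpr hc)
  rw [inv_smul_smul₀ hc.ne'] at h
  calc c * inducedNorm K e x ≤ c * (c⁻¹ * inducedNorm K e (c • x)) := by
        exact mul_le_mul_of_nonneg_left h hc.le
    _ = inducedNorm K e (c • x) := by field_simp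

lemma iN_neg (x : E) : inducedNorm K e (-x) = inducedNorm K e x := by
  unfold inducedNorm
  congr 1
  ext α
  simp only [Set.mem_setOf_eq, neg_neg]
  tauto

lemma iN_add (x y : E) :
    inducedNorm K e (x + y) ≤ inducedNorm K e x + inducedNorm K e y := by
  obtain ⟨h0, h1, h2⟩ := norm_mem hKclosed hKcone he x
  obtain ⟨g0, g1, g2⟩ := norm_mem hKclosed hKcone he y
  refine iN_le ⟨by positivity, ?_, ?_⟩
  · have := hKadd hKconv hKcone h1 g1
    rw [add_smul]
    convert this using 1
    abel
  · have := hKadd hKconv hKcone h2 g2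
    rw [add_smul]
    convert this using 1
    abel

lemma iN_eq_zero {x : E} (hx : inducedNorm K e x = 0) : x = 0 := by
  obtain ⟨h0, h1, h2⟩ := norm_mem hKclosed hKcone he x
  rw [hx, zero_smul, add_zero] at h1 h2
  exact hKpointed x h1 h2

lemma neg_e_not_mem (he0 : e ≠ 0) : -e ∉ K := fun h =>
  he0 (hKpointed e (interior_subset he) h)

lemma iN_e (he0 : e ≠ 0) : inducedNorm K e e = 1 := by
  have hle : inducedNorm K e e ≤ 1 := by
    refine iN_le ⟨zero_le_one, ?_, by simpa using hK0 hKcone he⟩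
    rw [one_smul]
    exact hKadd hKconv hKcone (interior_subset he) (interior_subset he)
  obtain ⟨h0, h1, h2⟩ := norm_mem hKclosed hKcone he e
  by_contra hne
  have hlt : inducedNorm K e e < 1 := lt_of_le_of_ne hle hne
  have heq : -e + inducedNorm K e e • e = (inducedNorm K e e - 1) • e := by
    rw [sub_smul, one_smul]; abel
  rw [heq] at h2
  have := hKcone (le_of_lt (inv_pos.mpr (by linarith : (0:ℝ) < 1 - inducedNorm K e e))) h2
  rw [smul_smul] at this
  have heq2 : (1 - inducedNorm K e e)⁻¹ * (inducedNorm K e e - 1) = -1 := by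
    rw [inv_mul_eq_div, div_eq_iff (by linarith : (1:ℝ) - inducedNorm K e e ≠ 0)]
    ring
  rw [heq2, neg_one_smul] at this
  exact neg_e_not_mem hKclosed hKconv hKcone hKpointed he he0 this

lemma iN_continuous : Continuous (inducedNorm K e) := by
  obtain ⟨ε, hε, hball⟩ := exists_eps (K := K) he
  have hub : ∀ x : E, inducedNorm K e x ≤ ‖x‖/ε := fun x =>
    iN_le (nset_mem_div hKcone he hε hball x)
  have key : ∀ x y : E, inducedNorm K e x - inducedNorm K e y ≤ ‖x - y‖/ε := by
    intro x y
    have h1 : inducedNorm K e x ≤ inducedNorm K e (x - y) + inducedNorm K e y := by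
      have := iN_add hKclosed hKconv hKcone hKpointed he (x - y) y
      simpa using this
    have h2 := hub (x - y)
    linarith
  have : LipschitzWith (Real.toNNReal ε⁻¹) (inducedNorm K e) := by
    apply LipschitzWith.of_dist_le_mul
    intro x y
    rw [Real.dist_eq, dist_eq_norm]
    have h1 := key x y
    have h2 := key y x
    rw [norm_sub_rev y x] at h2
    rw [abs_le]
    have hc : (Real.toNNReal ε⁻¹ : ℝ) = ε⁻¹ := Real.coe_toNNReal _ (by positivity)
    rw [hc]
    have heq : ‖x - y‖/ε = ε⁻¹ * ‖x - y‖ := by rw [div_eq_inv_mul]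
    rw [heq] at h1 h2
    constructor <;> linarith
  exact this.continuous


variable (hKclosed : IsClosed K) (hKconv : Convex ℝ K)
  (hKcone : ∀ ⦃c : ℝ⦄, 0 ≤ c → ∀ ⦃x⦄, x ∈ K → c • x ∈ K)
  (hKpointed : ∀ x ∈ K, -x ∈ K → x = 0)
  (he : e ∈ interior K)

include hKclosed hKconv hKcone hKpointed he

lemma exists_m [FiniteDimensional ℝ E] (he0 : e ≠ 0) :
    ∃ m : ℝ, 0 < m ∧ ∀ x : E, m * ‖x‖ ≤ inducedNorm K e x := by
  haveI : Nontrivial E := nontrivial_of_ne e 0 he0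
  have hsph : (Metric.sphere (0:E) 1).Nonempty := NormedSpace.sphere_nonempty.mpr zero_le_one
  obtain ⟨x₀, hx₀, hmin⟩ := (isCompact_sphere (0:E) 1).exists_isMinOn hsph
    (iN_continuous hKclosed hKconv hKcone hKpointed he).continuousOn
  have hx₀n : ‖x₀‖ = 1 := by simpa using hx₀
  have hx₀0 : x₀ ≠ 0 := by intro h; rw [h] at hx₀n; simp at hx₀n
  refine ⟨inducedNorm K e x₀, ?_, ?_⟩
  · rcases (iN_nonneg hKclosed hKcone he x₀).lt_or_eq with h | h
    · exact h
    · exact absurd (iN_eq_zero hKclosed hKconv hKcone hKpointed he h.symm) hx₀0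
  · intro x
    rcases eq_or_ne x 0 with rfl | hx
    · simp [iN_zero hKclosed hKconv hKcone hKpointed he]
    · have hxn : (0:ℝ) < ‖x‖ := norm_pos_iff.mpr hx
      set u : E := ‖x‖⁻¹ • x with hu
      have hun : u ∈ Metric.sphere (0:E) 1 := by
        simp [hu, norm_smul, abs_of_pos (inv_pos.mpr hxn), inv_mul_cancel₀ hxn.ne']
      have h1 : inducedNorm K e x₀ ≤ inducedNorm K e u := hmin hun
      have h2 : inducedNorm K e x = ‖x‖ * inducedNorm K e u := by
        rw [← iN_smul hKclosed hKconv hKcone hKpointed he u hxn, hu, smul_inv_smul₀ hxn.ne']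
      rw [h2, mul_comm (inducedNorm K e x₀) ‖x‖]
      exact mul_le_mul_of_nonneg_left h1 hxn.le

-- eigenvalue lemmas
lemma eig_ub (he0 : e ≠ 0) {x : E} {t : ℝ} (ht : x - t • e ∈ K) : t ≤ inducedNorm K e x := by
  by_contra hlt
  push_neg at hlt
  obtain ⟨h0, h1, h2⟩ := norm_mem hKclosed hKcone he x
  have hsum := hKadd hKconv hKcone ht h2
  have heq : x - t • e + (-x + inducedNorm K e x • e) = (inducedNorm K e x - t) • e := by
    rw [sub_smul]; abel
  rw [heq] at hsum
  have hc : (0:ℝ) < (t - inducedNorm K e x)⁻¹ := inv_pos.mpr (by linarith)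
  have := hKcone hc.le hsum
  rw [smul_smul] at this
  have heq2 : (t - inducedNorm K e x)⁻¹ * (inducedNorm K e x - t) = -1 := by
    rw [inv_mul_eq_div, div_eq_iff (by linarith : t - inducedNorm K e x ≠ 0)]; ring
  rw [heq2, neg_one_smul] at this
  exact neg_e_not_mem hKclosed hKconv hKcone hKpointed he he0 this

lemma eig_bddAbove (he0 : e ≠ 0) (x : E) : BddAbove {t : ℝ | x - t • e ∈ K} :=
  ⟨inducedNorm K e x, fun t ht => eig_ub hKclosed hKconv hKcone hKpointed he he0 ht⟩

lemma eig_set_nonempty (x : E) : (-(inducedNorm K e x)) ∈ {t : ℝ | x - t • e ∈ K} := by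
  have h1 := (norm_mem hKclosed hKcone he x).2.1
  simpa [sub_eq_add_neg, neg_smul] using h1

lemma eig_ge (he0 : e ≠ 0) {x : E} {t : ℝ} (ht : x - t • e ∈ K) : t ≤ inducedEig K e x :=
  le_csSup (eig_bddAbove hKclosed hKconv hKcone hKpointed he he0 x) ht

lemma eig_le_inner {u : E} (hu : u ∈ dualCone K) (hue : ⟪u, e⟫ = 1) (x : E) :
    inducedEig K e x ≤ ⟪u, x⟫ := by
  refine csSup_le ⟨_, eig_set_nonempty hKclosed hKconv hKcone hKpointed he x⟩ fun t ht => ?_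
  have h0 := hu _ ht
  rw [inner_sub_right, inner_smul_right, hue, mul_one] at h0
  linarith

lemma eig_zero (he0 : e ≠ 0) : inducedEig K e 0 = 0 := by
  refine le_antisymm ?_ ?_
  · refine csSup_le ⟨0, by simpa using hK0 hKcone he⟩ fun t ht => ?_
    have := eig_ub hKclosed hKconv hKcone hKpointed he he0 ht
    rwa [iN_zero hKclosed hKconv hKcone hKpointed he] at this
  · exact eig_ge hKclosed hKconv hKcone hKpointed he he0 (by simpa using hK0 hKcone he)

-- dual norm lemmas
lemma dset_nonempty (he0 : e ≠ 0) (w : E) :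
    (⟪w, e⟫ : ℝ) ∈ {r | ∃ x, inducedNorm K e x = 1 ∧ r = ⟪w, x⟫} :=
  ⟨e, iN_e hKclosed hKconv hKcone hKpointed he he0, rfl⟩

lemma dset_bddAbove {m : ℝ} (hm : 0 < m) (hmN : ∀ x : E, m * ‖x‖ ≤ inducedNorm K e x) (w : E) :
    BddAbove {r | ∃ x, inducedNorm K e x = 1 ∧ r = ⟪w, x⟫} := by
  refine ⟨‖w‖ * m⁻¹, ?_⟩
  rintro r ⟨x, hx, rfl⟩
  have h := hmN x
  rw [hx] at h
  have hxb : ‖x‖ ≤ m⁻¹ := by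
    have h2 := mul_le_mul_of_nonneg_left h (inv_pos.mpr hm).le
    rwa [← mul_assoc, inv_mul_cancel₀ hm.ne', one_mul, mul_one] at h2
  calc (⟪w, x⟫ : ℝ) ≤ ‖w‖ * ‖x‖ := real_inner_le_norm w x
    _ ≤ ‖w‖ * m⁻¹ := mul_le_mul_of_nonneg_left hxb (norm_nonneg w)

lemma dual_ge {w x : E} (hx : inducedNorm K e x = 1)
    {m : ℝ} (hm : 0 < m) (hmN : ∀ x : E, m * ‖x‖ ≤ inducedNorm K e x) :
    ⟪w, x⟫ ≤ dualNorm (inducedNorm K e) w :=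
  le_csSup (dset_bddAbove hKclosed hKconv hKcone hKpointed he hm hmN w) ⟨x, hx, rfl⟩

lemma dual_nonneg (he0 : e ≠ 0) {m : ℝ} (hm : 0 < m)
    (hmN : ∀ x : E, m * ‖x‖ ≤ inducedNorm K e x) (w : E) :
    0 ≤ dualNorm (inducedNorm K e) w := by
  have h1 : ⟪w, e⟫ ≤ dualNorm (inducedNorm K e) w :=
    dual_ge hKclosed hKconv hKcone hKpointed he
      (iN_e hKclosed hKconv hKcone hKpointed he he0) hm hmN
  have h2 : ⟪w, -e⟫ ≤ dualNorm (inducedNorm K e) w := by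
    refine dual_ge hKclosed hKconv hKcone hKpointed he ?_ hm hmN
    rw [iN_neg hKclosed hKconv hKcone hKpointed he,
      iN_e hKclosed hKconv hKcone hKpointed he he0]
  rw [inner_neg_right] at h2
  linarith

lemma dual_le (he0 : e ≠ 0) {w : E} {M : ℝ}
    (h : ∀ x : E, inducedNorm K e x = 1 → ⟪w, x⟫ ≤ M) :
    dualNorm (inducedNorm K e) w ≤ M := by
  refine csSup_le ⟨_, dset_nonempty hKclosed hKconv hKcone hKpointed he he0 w⟩ ?_
  rintro r ⟨x, hx, rfl⟩
  exact h x hx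

lemma inner_le_dual (he0 : e ≠ 0) {m : ℝ} (hm : 0 < m)
    (hmN : ∀ x : E, m * ‖x‖ ≤ inducedNorm K e x) {w x : E}
    (hx : inducedNorm K e x ≤ 1) : ⟪w, x⟫ ≤ dualNorm (inducedNorm K e) w := by
  rcases eq_or_ne x 0 with rfl | hx0
  · rw [inner_zero_right]
    exact dual_nonneg hKclosed hKconv hKcone hKpointed he he0 hm hmN w
  · have hc : 0 < inducedNorm K e x := by
      rcases (iN_nonneg hKclosed hKcone he x).lt_or_eq with h | h
      · exact h
      · exact absurd (iN_eq_zero hKclosed hKconv hKcone hKpointed he h.symm) hx0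
    set c := inducedNorm K e x with hcdef
    have hNu : inducedNorm K e (c⁻¹ • x) = 1 := by
      rw [iN_smul hKclosed hKconv hKcone hKpointed he x (inv_pos.mpr hc), ← hcdef,
        inv_mul_cancel₀ hc.ne']
    have h1 : ⟪w, c⁻¹ • x⟫ ≤ dualNorm (inducedNorm K e) w :=
      dual_ge hKclosed hKconv hKcone hKpointed he hNu hm hmN
    rw [inner_smul_right] at h1
    have h2 : (⟪w, x⟫ : ℝ) ≤ c * dualNorm (inducedNorm K e) w := by
      have := mul_le_mul_of_nonneg_left h1 hc.le
      rw [← mul_assoc, mul_inv_cancel₀ hc.ne', one_mul] at this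
      exact this
    calc (⟪w, x⟫ : ℝ) ≤ c * dualNorm (inducedNorm K e) w := h2
      _ ≤ 1 * dualNorm (inducedNorm K e) w :=
          mul_le_mul_of_nonneg_right hx
            (dual_nonneg hKclosed hKconv hKcone hKpointed he he0 hm hmN w)
      _ = _ := one_mul _




variable {E : Type*} [NormedAddCommGroup E] [InnerProductSpace ℝ E]
variable {K : Set E} {e : E}

end Included

lemma cone_nonneg (hK0 : (0:E) ∈ K)
    (hKcone : ∀ ⦃c : ℝ⦄, 0 ≤ c → ∀ ⦃x⦄, x ∈ K → c • x ∈ K)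
    {f : E →L[ℝ] ℝ} {v : ℝ} (hf : ∀ b ∈ K, v < f b) : v < 0 ∧ ∀ k ∈ K, 0 ≤ f k := by
  have hv : v < 0 := by simpa using hf 0 hK0
  refine ⟨hv, fun k hk => ?_⟩
  by_contra h
  push_neg at h
  have hc : 0 ≤ (v-1)/(f k) := div_nonneg_of_nonpos (by linarith) h.le
  have h2 := hf _ (hKcone hc hk)
  rw [map_smul, smul_eq_mul, div_mul_cancel₀ _ (ne_of_lt h)] at h2
  linarith

lemma exists_dual_unit [CompleteSpace E] (hKclosed : IsClosed K) (hKconv : Convex ℝ K)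
    (hKcone : ∀ ⦃c : ℝ⦄, 0 ≤ c → ∀ ⦃x⦄, x ∈ K → c • x ∈ K)
    (hK0 : (0:E) ∈ K) (hneg : -e ∉ K) (heK : e ∈ K) :
    ∃ u, u ∈ dualCone K ∧ ⟪u, e⟫ = 1 := by
  have hdisj : Disjoint {-e} K := Set.disjoint_singleton_left.mpr hneg
  obtain ⟨f, u, v, hfu, huv, hfv⟩ := geometric_hahn_banach_compact_closed
    (convex_singleton (-e)) isCompact_singleton hKconv hKclosed hdisj
  obtain ⟨hv0, hnn⟩ := cone_nonneg hK0 hKcone hfv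
  have hfe : 0 < f e := by
    have h1 := hfu (-e) (Set.mem_singleton _)
    rw [map_neg] at h1
    linarith
  set x₀ := (InnerProductSpace.toDual ℝ E).symm f with hx₀def
  have hx₀ : ∀ z : E, ⟪x₀, z⟫ = f z := fun z => InnerProductSpace.toDual_symm_apply
  refine ⟨(f e)⁻¹ • x₀, fun k hk => ?_, ?_⟩
  · rw [real_inner_smul_left, hx₀]
    exact mul_nonneg (inv_pos.mpr hfe).le (hnn k hk)
  · rw [real_inner_smul_left, hx₀, inv_mul_cancel₀ hfe.ne']



end NuDualityAux

/-- With `‖·‖ = ‖·‖ₑ`, `ν(L) = max {λₑ(x) : x ∈ L, ‖x‖ₑ ≤ 1}`; here the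
normalization `‖u‖ₑ* = 1` of `u ∈ K*` is expressed as `⟪u, e⟫ = 1`. -/
theorem nu_eq_max_inducedEig {E : Type*} [NormedAddCommGroup E]
    [InnerProductSpace ℝ E] [FiniteDimensional ℝ E] (K : Set E)
    (hKclosed : IsClosed K) (hKconv : Convex ℝ K)
    (hKcone : ∀ ⦃c : ℝ⦄, 0 ≤ c → ∀ ⦃x⦄, x ∈ K → c • x ∈ K)
    (hKpointed : ∀ x ∈ K, -x ∈ K → x = 0)
    (e : E) (he : e ∈ interior K) (L : Submodule ℝ E) :
    sInf {r | ∃ u y, u ∈ dualCone K ∧ y ∈ Lᗮ ∧ ⟪u, e⟫ = 1 ∧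
        r = dualNorm (inducedNorm K e) (u - y)} =
      sSup {r | ∃ x ∈ L, inducedNorm K e x ≤ 1 ∧ r = inducedEig K e x} := by
  classical
  by_cases he0 : e = 0
  · -- degenerate case: E must be trivial
    subst he0
    have hK0 : (0:E) ∈ K := interior_subset he
    have hall : ∀ x : E, x ∈ K := by
      intro x
      obtain ⟨δ, hδ, hball⟩ := Metric.mem_nhds_iff.mp (mem_interior_iff_mem_nhds.mp he)
      rcases eq_or_ne x 0 with rfl | hx
      · exact hK0
      · have hxn : (0:ℝ) < ‖x‖ := norm_pos_iff.mpr hx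
        have ht : (0:ℝ) < δ/(2*‖x‖) := by positivity
        have hmem : (δ/(2*‖x‖)) • x ∈ K := by
          apply hball
          simp only [Metric.mem_ball, dist_zero_right, norm_smul, Real.norm_eq_abs,
            abs_of_pos ht]
          have hhe : δ / (2 * ‖x‖) * ‖x‖ = δ/2 := by field_simp
          rw [hhe]
          linarith
        have h2 := hKcone (inv_pos.mpr ht).le hmem
        rwa [inv_smul_smul₀ ht.ne'] at h2
    have hA : {r | ∃ u y, u ∈ dualCone K ∧ y ∈ Lᗮ ∧ ⟪u, (0:E)⟫ = 1 ∧
        r = dualNorm (inducedNorm K 0) (u - y)} = ∅ := by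
      ext r
      simp only [Set.mem_setOf_eq, Set.mem_empty_iff_false, iff_false]
      rintro ⟨u, y, _, _, h1, _⟩
      rw [inner_zero_right] at h1
      exact one_ne_zero h1.symm
    have heig : ∀ x : E, inducedEig K (0:E) x = 0 := by
      intro x
      have h : {t : ℝ | x - t • (0:E) ∈ K} = Set.univ := by
        ext t; simp [hall]
      rw [inducedEig, h, Real.sSup_univ]
    have hR : {r | ∃ x ∈ L, inducedNorm K (0:E) x ≤ 1 ∧ r = inducedEig K (0:E) x} = {0} := by
      ext r
      simp only [Set.mem_setOf_eq, Set.mem_singleton_iff]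
      constructor
      · rintro ⟨x, hx, _, rfl⟩
        exact heig x
      · rintro rfl
        refine ⟨0, L.zero_mem, ?_, (heig 0).symm⟩
        have h : {α : ℝ | 0 ≤ α ∧ (0:E) + α • (0:E) ∈ K ∧ -(0:E) + α • (0:E) ∈ K}
            = Set.Ici 0 := by
          ext α; simp [hall]
        rw [inducedNorm, h, csInf_Ici]
        exact zero_le_one
    rw [hA, hR, Real.sInf_empty, csSup_singleton]
  · -- main case
    have heK : e ∈ K := interior_subset he
    have hK0 : (0:E) ∈ K := NuDualityAux.hK0 hKcone he
    obtain ⟨m, hm, hmN⟩ := NuDualityAux.exists_m hKclosed hKconv hKcone hKpointed he he0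
    obtain ⟨u₀, hu₀K, hu₀e⟩ := NuDualityAux.exists_dual_unit hKclosed hKconv hKcone hK0
      (NuDualityAux.neg_e_not_mem hKclosed hKconv hKcone hKpointed he he0) heK
    set A : Set ℝ := {r | ∃ u y, u ∈ dualCone K ∧ y ∈ Lᗮ ∧ ⟪u, e⟫ = 1 ∧
        r = dualNorm (inducedNorm K e) (u - y)} with hAdef
    set R : Set ℝ := {r | ∃ x ∈ L, inducedNorm K e x ≤ 1 ∧ r = inducedEig K e x} with hRdef
    have hAne : A.Nonempty :=
      ⟨dualNorm (inducedNorm K e) (u₀ - 0), u₀, 0, hu₀K, Submodule.zero_mem _, hu₀e, rfl⟩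
    have hAbdd : BddBelow A := by
      refine ⟨0, ?_⟩
      rintro r ⟨u, y, huK, hyL, hue, rfl⟩
      exact NuDualityAux.dual_nonneg hKclosed hKconv hKcone hKpointed he he0 hm hmN _
    have hR0 : (0:ℝ) ∈ R := by
      refine ⟨0, L.zero_mem, ?_, (NuDualityAux.eig_zero hKclosed hKconv hKcone hKpointed he he0).symm⟩
      rw [NuDualityAux.iN_zero hKclosed hKconv hKcone hKpointed he]
      exact zero_le_one
    have hRbdd : BddAbove R := by
      refine ⟨‖u₀‖ * m⁻¹, ?_⟩
      rintro r ⟨x, hxL, hxN, rfl⟩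
      have h1 : inducedEig K e x ≤ ⟪u₀, x⟫ :=
        NuDualityAux.eig_le_inner hKclosed hKconv hKcone hKpointed he hu₀K hu₀e x
      have h2 : (⟪u₀, x⟫:ℝ) ≤ ‖u₀‖ * ‖x‖ := real_inner_le_norm u₀ x
      have h3 : ‖x‖ ≤ m⁻¹ := by
        have h4 := hmN x
        have h5 := mul_le_mul_of_nonneg_left (h4.trans hxN) (inv_pos.mpr hm).le
        rwa [← mul_assoc, inv_mul_cancel₀ hm.ne', one_mul, mul_one] at h5
      calc inducedEig K e x ≤ ‖u₀‖ * ‖x‖ := h1.trans h2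
        _ ≤ ‖u₀‖ * m⁻¹ := mul_le_mul_of_nonneg_left h3 (norm_nonneg u₀)
    -- weak duality
    have hweak : sSup R ≤ sInf A := by
      refine le_csInf hAne ?_
      rintro r ⟨u, y, huK, hyL, hue, rfl⟩
      refine csSup_le ⟨0, hR0⟩ ?_
      rintro s ⟨x, hxL, hxN, rfl⟩
      have h1 : inducedEig K e x ≤ ⟪u, x⟫ :=
        NuDualityAux.eig_le_inner hKclosed hKconv hKcone hKpointed he huK hue x
      have h2 : (⟪u - y, x⟫:ℝ) = ⟪u, x⟫ := by
        rw [inner_sub_left]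
        have h3 : (⟪x, y⟫:ℝ) = 0 := (Submodule.mem_orthogonal L y).mp hyL x hxL
        rw [real_inner_comm x y, h3, sub_zero]
      have h4 : (⟪u - y, x⟫:ℝ) ≤ dualNorm (inducedNorm K e) (u - y) :=
        NuDualityAux.inner_le_dual hKclosed hKconv hKcone hKpointed he he0 hm hmN hxN
      linarith
    -- strong duality
    have hstrong : sInf A ≤ sSup R := by
      set ν := sSup R with hνdef
      have hν0 : (0:ℝ) ≤ ν := le_csSup hRbdd hR0
      have key : ∀ s : ℝ, 0 < s → s ≤ 1 → sInf A ≤ ν + s := by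
        intro s hs0 hs1
        -- the compact convex set G
        set B : Set E := {x | inducedNorm K e x ≤ 1} with hBdef
        have hsmul : ∀ (c : ℝ), 0 ≤ c → ∀ x : E,
            inducedNorm K e (c • x) = c * inducedNorm K e x := by
          intro c hc x
          rcases hc.lt_or_eq with h | h
          · exact NuDualityAux.iN_smul hKclosed hKconv hKcone hKpointed he x h
          · rw [← h, zero_smul, zero_mul, NuDualityAux.iN_zero hKclosed hKconv hKcone hKpointed he]
        have hBconv : Convex ℝ B := by
          intro x hx y hy a b ha hb hab
          have h1 := NuDualityAux.iN_add hKclosed hKconv hKcone hKpointed he (a • x) (b • y)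
          rw [hsmul a ha x, hsmul b hb y] at h1
          have h2 : a * inducedNorm K e x + b * inducedNorm K e y ≤ a + b := by
            have := mul_le_mul_of_nonneg_left hx ha
            have := mul_le_mul_of_nonneg_left hy hb
            nlinarith
          simp only [hBdef, Set.mem_setOf_eq] at *
          linarith [hab ▸ h2]
        have hBclosed : IsClosed B :=
          isClosed_le (NuDualityAux.iN_continuous hKclosed hKconv hKcone hKpointed he) continuous_const
        have hBcomp : IsCompact B := by
          refine (isCompact_closedBall (0:E) m⁻¹).of_isClosed_subset hBclosed ?_
          intro x hx
          rw [Metric.mem_closedBall, dist_zero_right]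
          have h4 := hmN x
          have h5 := mul_le_mul_of_nonneg_left (h4.trans hx) (inv_pos.mpr hm).le
          rwa [← mul_assoc, inv_mul_cancel₀ hm.ne', one_mul, mul_one] at h5
        set S : Set (E × ℝ) := ((L : Set E) ∩ B) ×ˢ Set.Icc (ν+s) (ν+1) with hSdef
        have hLBcomp : IsCompact ((L : Set E) ∩ B) :=
          hBcomp.of_isClosed_subset
            ((Submodule.closed_of_finiteDimensional L).inter hBclosed)
            Set.inter_subset_right
        have hScomp : IsCompact S := hLBcomp.prod isCompact_Icc
        have hSconv : Convex ℝ S := (L.convex.inter hBconv).prod (convex_Icc _ _)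
        set φ : E × ℝ →ₗ[ℝ] E :=
          LinearMap.fst ℝ E ℝ - (LinearMap.toSpanSingleton ℝ E e).comp (LinearMap.snd ℝ E ℝ)
          with hφdef
        have hφ : ∀ p : E × ℝ, φ p = p.1 - p.2 • e := fun p => rfl
        set G : Set E := φ '' S with hGdef
        have hGconv : Convex ℝ G := hSconv.linear_image φ
        have hGcomp : IsCompact G := hScomp.image φ.continuous_of_finiteDimensional
        have hdisj : Disjoint G K := by
          rw [Set.disjoint_left]
          rintro z ⟨⟨x, t⟩, ⟨⟨hxL, hxB⟩, htI⟩, rfl⟩ hzK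
          rw [hφ] at hzK
          have h1 : t ≤ inducedEig K e x :=
            NuDualityAux.eig_ge hKclosed hKconv hKcone hKpointed he he0 hzK
          have h2 : inducedEig K e x ≤ ν := le_csSup hRbdd ⟨x, hxL, hxB, rfl⟩
          have h3 := htI.1
          linarith
        obtain ⟨f, uu, vv, hfu, huv, hfv⟩ := geometric_hahn_banach_compact_closed
          hGconv hGcomp hKconv hKclosed hdisj
        obtain ⟨hv0, hnn⟩ := NuDualityAux.cone_nonneg hK0 hKcone hfv
        have hGmem0 : φ ((0 : E), ν+s) ∈ G := by
          refine ⟨((0:E), ν+s), ⟨⟨L.zero_mem, ?_⟩, le_rfl, by show ν + s ≤ ν + 1; linarith⟩, rfl⟩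
          show inducedNorm K e 0 ≤ 1
          rw [NuDualityAux.iN_zero hKclosed hKconv hKcone hKpointed he]
          exact zero_le_one
        have hfe : 0 < f e := by
          have h1 := hfu _ hGmem0
          rw [hφ] at h1
          simp only [zero_sub, map_neg, map_smul, smul_eq_mul] at h1
          nlinarith
        set x₀ : E := (InnerProductSpace.toDual ℝ E).symm f with hx₀def
        have hx₀ : ∀ z : E, ⟪x₀, z⟫ = f z := fun z => InnerProductSpace.toDual_symm_apply
        set u₁ : E := (f e)⁻¹ • x₀ with hu₁def
        have hu₁K : u₁ ∈ dualCone K := by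
          intro k hk
          rw [hu₁def, real_inner_smul_left, hx₀]
          exact mul_nonneg (inv_pos.mpr hfe).le (hnn k hk)
        have hu₁e : ⟪u₁, e⟫ = 1 := by
          rw [hu₁def, real_inner_smul_left, hx₀, inv_mul_cancel₀ hfe.ne']
        have hbound : ∀ x ∈ L, inducedNorm K e x ≤ 1 → ⟪u₁, x⟫ ≤ ν + s := by
          intro x hxL hxB
          have hGm : φ (x, ν+s) ∈ G := ⟨(x, ν+s), ⟨⟨hxL, hxB⟩, le_rfl, by show ν + s ≤ ν + 1; linarith⟩, rfl⟩
          have h1 := hfu _ hGm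
          rw [hφ] at h1
          simp only [map_sub, map_smul, smul_eq_mul] at h1
          rw [hu₁def, real_inner_smul_left, hx₀]
          rw [inv_mul_le_iff₀ hfe]
          nlinarith
        -- Hahn-Banach extension
        set pL : E →ₗ.[ℝ] ℝ :=
          ⟨L, ((innerSL ℝ u₁ : E →L[ℝ] ℝ) : E →ₗ[ℝ] ℝ).comp L.subtype⟩ with hpLdef
        have hpLval : ∀ x : pL.domain, pL x = ⟪u₁, (x : E)⟫ := fun x => rfl
        have hf_le : ∀ x : pL.domain, pL x ≤ (ν + s) * inducedNorm K e (x : E) := by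
          rintro ⟨x, hx⟩
          rw [hpLval]
          rcases eq_or_ne x 0 with h | h
          · simp only [h, inner_zero_right]
            rw [NuDualityAux.iN_zero hKclosed hKconv hKcone hKpointed he]
            simp
          · have hc : 0 < inducedNorm K e x := by
              rcases (NuDualityAux.iN_nonneg hKclosed hKcone he x).lt_or_eq with hh | hh
              · exact hh
              · exact absurd (NuDualityAux.iN_eq_zero hKclosed hKconv hKcone hKpointed he hh.symm) h
            set c := inducedNorm K e x with hcdef
            have hx' : (c⁻¹ • x) ∈ L := L.smul_mem _ hx
            have hNx' : inducedNorm K e (c⁻¹ • x) ≤ 1 := by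
              rw [NuDualityAux.iN_smul hKclosed hKconv hKcone hKpointed he x (inv_pos.mpr hc), ← hcdef,
                inv_mul_cancel₀ hc.ne']
            have h1 := hbound _ hx' hNx'
            rw [real_inner_smul_right] at h1
            have h2 := mul_le_mul_of_nonneg_left h1 hc.le
            rw [← mul_assoc, mul_inv_cancel₀ hc.ne', one_mul] at h2
            calc (⟪u₁, x⟫:ℝ) ≤ c * (ν + s) := h2
              _ = (ν + s) * c := mul_comm _ _
        obtain ⟨g, hg_eq, hg_le⟩ := exists_extension_of_le_sublinear pL
          (fun x => (ν + s) * inducedNorm K e x)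
          (by
            intro c hc x
            show (ν + s) * inducedNorm K e (c • x) = c * ((ν + s) * inducedNorm K e x)
            rw [NuDualityAux.iN_smul hKclosed hKconv hKcone hKpointed he x hc]
            ring)
          (by
            intro x y
            show (ν + s) * inducedNorm K e (x + y) ≤
              (ν + s) * inducedNorm K e x + (ν + s) * inducedNorm K e y
            have h1 := NuDualityAux.iN_add hKclosed hKconv hKcone hKpointed he x y
            have hνs : (0:ℝ) ≤ ν + s := by linarith
            nlinarith)
          hf_le
        set G' : E →L[ℝ] ℝ := ⟨g, g.continuous_of_finiteDimensional⟩ with hG'def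
        set w : E := (InnerProductSpace.toDual ℝ E).symm G' with hwdef
        have hw : ∀ z : E, ⟪w, z⟫ = g z := fun z => InnerProductSpace.toDual_symm_apply
        set y : E := u₁ - w with hydef
        have hyL : y ∈ Lᗮ := by
          rw [Submodule.mem_orthogonal]
          intro x hx
          rw [hydef, inner_sub_right]
          have h1 : g x = ⟪u₁, x⟫ := by
            have := hg_eq ⟨x, hx⟩
            rw [hpLval] at this
            exact this
          rw [real_inner_comm u₁ x, real_inner_comm w x, hw, h1, sub_self]
        have hsub : u₁ - y = w := by rw [hydef]; abel
        have hval : dualNorm (inducedNorm K e) (u₁ - y) ≤ ν + s := by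
          rw [hsub]
          refine NuDualityAux.dual_le hKclosed hKconv hKcone hKpointed he he0 ?_
          intro x hx
          rw [hw]
          have := hg_le x
          rw [hx, mul_one] at this
          exact this
        have hmem : dualNorm (inducedNorm K e) (u₁ - y) ∈ A := ⟨u₁, y, hu₁K, hyL, hu₁e, rfl⟩
        exact (csInf_le hAbdd hmem).trans hval
      by_contra hcon
      push_neg at hcon
      set ε := (sInf A - ν)/2 with hεdef
      have hε0 : 0 < ε := by simp only [hεdef]; linarith
      have h1 := key (min ε 1) (lt_min hε0 one_pos) (min_le_right _ _)
      have h2 : min ε 1 ≤ ε := min_le_left _ _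
      simp only [hεdef] at h1 h2 ⊢
      linarith
    exact le_antisymm hstrong hweak
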